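/- Soundness of disjunction introduction: if X and Y are independent Boolean random variables with P(X = true) ∈ [t, 1−f] and P(Y = true) ∈ [t', 1−f'], where (t,f),(t',f') ∈ C, then P(X ∨ Y = true) ∈ [t + t' − t·t', 1 − f·f']. -/

import Mathlib

open MeasureTheory ProbabilityTheory

theorem disj_intro_sound {Ω : Type*} [MeasurableSpace Ω] (μ : Measure Ω) [IsProbabilityMeasure μ]
    (X Y : Ω → Bool) (hX : Measurable X) (hY : Measurable Y)
    (hindep : IndepFun X Y μ) (t f t' f' : ℝ)
    (hc : 0 ≤ t ∧ 0 ≤ f ∧ t + f ≤ 1) (hc' : 0 ≤ t' ∧ 0 ≤ f' ∧ t' + f' ≤ 1)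
    (hXc : (μ {ω | X ω = true}).toReal ∈ Set.Icc t (1 - f))
    (hYc : (μ {ω | Y ω = true}).toReal ∈ Set.Icc t' (1 - f')) :
    (μ {ω | (X ω || Y ω) = true}).toReal ∈ Set.Icc (t + t' - t * t') (1 - f * f') := by
  obtain ⟨ht, hf, htf⟩ := hc
  obtain ⟨ht', hf', htf'⟩ := hc'
  obtain ⟨hp1, hp2⟩ := hXc
  obtain ⟨hq1, hq2⟩ := hYc
  set p := (μ {ω | X ω = true}).toReal with hp
  set q := (μ {ω | Y ω = true}).toReal with hq
  have hXm : MeasurableSet {ω | X ω = true} := hX (measurableSet_singleton true)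
  have hYm : MeasurableSet {ω | Y ω = true} := hY (measurableSet_singleton true)
  have hcomplX : {ω | X ω = false} = {ω | X ω = true}ᶜ := by
    ext ω; simp only [Set.mem_compl_iff, Set.mem_setOf_eq, Bool.not_eq_true]
  have hcomplY : {ω | Y ω = false} = {ω | Y ω = true}ᶜ := by
    ext ω; simp only [Set.mem_compl_iff, Set.mem_setOf_eq, Bool.not_eq_true]
  have hXf : (μ {ω | X ω = false}).toReal = 1 - p := by
    rw [hcomplX, prob_compl_eq_one_sub hXm]
    rw [ENNReal.toReal_sub_of_le prob_le_one (by simp)]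
    simp
    exact hp.symm
  have hYf : (μ {ω | Y ω = false}).toReal = 1 - q := by
    rw [hcomplY, prob_compl_eq_one_sub hYm]
    rw [ENNReal.toReal_sub_of_le prob_le_one (by simp)]
    simp
    exact hq.symm
  have hinter : μ ({ω | X ω = false} ∩ {ω | Y ω = false})
      = μ {ω | X ω = false} * μ {ω | Y ω = false} := by
    have := hindep.measure_inter_preimage_eq_mul {false} {false}
      (measurableSet_singleton false) (measurableSet_singleton false)
    simpa [Set.preimage, Set.mem_singleton_iff] using this
  have hset : {ω | (X ω || Y ω) = true}ᶜ = {ω | X ω = false} ∩ {ω | Y ω = false} := by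
    ext ω
    simp only [Set.mem_compl_iff, Set.mem_setOf_eq, Set.mem_inter_iff,
      Bool.or_eq_true, not_or, Bool.not_eq_true]
  have hmain : (μ {ω | (X ω || Y ω) = true}).toReal = 1 - (1 - p) * (1 - q) := by
    have hsu : {ω | (X ω || Y ω) = true} = {ω | X ω = true} ∪ {ω | Y ω = true} := by
      ext ω
      simp only [Set.mem_union, Set.mem_setOf_eq, Bool.or_eq_true]
    have hm : MeasurableSet {ω | (X ω || Y ω) = true} := hsu ▸ hXm.union hYm
    have h1 : (μ {ω | (X ω || Y ω) = true}ᶜ).toReal = (1 - p) * (1 - q) := by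
      rw [hset, hinter, ENNReal.toReal_mul, hXf, hYf]
    have h2 := prob_compl_eq_one_sub (μ := μ) hm
    have h3 : (μ {ω | (X ω || Y ω) = true}ᶜ).toReal
        = 1 - (μ {ω | (X ω || Y ω) = true}).toReal := by
      rw [h2, ENNReal.toReal_sub_of_le prob_le_one (by simp)]
      simp
    linarith [h1, h3]
  rw [hmain]
  have hp0 : 0 ≤ p := ENNReal.toReal_nonneg
  have hq0 : 0 ≤ q := ENNReal.toReal_nonneg
  constructor
  · nlinarith [mul_nonneg (sub_nonneg.2 hp1) (sub_nonneg.2 hq1)]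
  · nlinarith [mul_le_mul (by linarith : f ≤ 1 - p) (by linarith : f' ≤ 1 - q) hf' (by linarith : (0:ℝ) ≤ 1 - p)]
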